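/- The quadratic Gaudin Hamiltonians commute: for pairwise distinct complex numbers z_1,...,z_n, the elements H_i = Σ_{j≠i} e_{ij}e_{ji}/(z_i - z_j) of the universal enveloping algebra U(gl_n) (where e_{ij} are the standard matrix unit generators) satisfy [H_i, H_k] = 0 for all i, k. -/

import Mathlib

open scoped BigOperators

attribute [local instance] LieRing.ofAssociativeRing

/-- The Lie algebra `gl_n` of `n × n` complex matrices. -/
abbrev gl (n : ℕ) := Matrix (Fin n) (Fin n) ℂ

/-- The matrix unit generator `e_{ij}` viewed inside `U(gl_n)`. -/
noncomputable def E (n : ℕ) (i j : Fin n) : UniversalEnvelopingAlgebra ℂ (gl n) :=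
  UniversalEnvelopingAlgebra.ι ℂ (Matrix.single i j 1)

/-- The quadratic Gaudin Hamiltonian `H_i = Σ_{j ≠ i} e_{ij} e_{ji} / (z_i - z_j)` in `U(gl_n)`. -/
noncomputable def gaudinH (n : ℕ) (z : Fin n → ℂ) (i : Fin n) :
    UniversalEnvelopingAlgebra ℂ (gl n) :=
  ∑ j ∈ Finset.univ.erase i, (z i - z j)⁻¹ • (E n i j * E n j i)

namespace GaudinAux

variable {n : ℕ}

/-- The commutation relations of the matrix units, inside `U(gl_n)`. -/
lemma lie_E (a b c d : Fin n) :
    ⁅E n a b, E n c d⁆ =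
      (if b = c then E n a d else 0) - (if d = a then E n c b else 0) := by
  rw [E, E, E, E, ← LieHom.map_lie]
  rw [show (⁅(Matrix.single a b 1 : gl n), (Matrix.single c d 1 : gl n)⁆ : gl n)
      = Matrix.single a b 1 * Matrix.single c d 1
        - Matrix.single c d 1 * Matrix.single a b 1 from Ring.lie_def _ _]
  by_cases hbc : b = c <;> by_cases hda : d = a <;>
    simp [hbc, hda, Matrix.single_mul_single_same, Matrix.single_mul_single_of_ne, map_sub]

lemma lie_expand (x a b : UniversalEnvelopingAlgebra ℂ (gl n)) :
    ⁅x, a * b⁆ = ⁅x, a⁆ * b + a * ⁅x, b⁆ := by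
  simp only [Ring.lie_def]; noncomm_ring

lemma mul_lie' (a b x : UniversalEnvelopingAlgebra ℂ (gl n)) :
    ⁅a * b, x⁆ = a * ⁅b, x⁆ + ⁅a, x⁆ * b := by
  simp only [Ring.lie_def]; noncomm_ring

lemma lie_XX_expand (a b c d : Fin n) :
    ⁅E n a b * E n b a, E n c d * E n d c⁆ =
      (E n a b * ⁅E n b a, E n c d⁆ + ⁅E n a b, E n c d⁆ * E n b a) * E n d c
      + E n c d * (E n a b * ⁅E n b a, E n d c⁆ + ⁅E n a b, E n d c⁆ * E n b a) := by
  rw [lie_expand, mul_lie', mul_lie']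

/-- `X_{ab}` and `X_{cd}` commute when `{a,b} ∩ {c,d} = ∅`. -/
lemma lie_X_disjoint {a b c d : Fin n} (hac : a ≠ c) (had : a ≠ d)
    (hbc : b ≠ c) (hbd : b ≠ d) :
    ⁅E n a b * E n b a, E n c d * E n d c⁆ = 0 := by
  rw [lie_XX_expand]
  simp [lie_E, hac, had, hbc, hbd, hac.symm, had.symm, hbc.symm, hbd.symm]

/-- `[X_{ab}, X_{bc}]` for pairwise distinct `a, b, c`. -/
lemma lie_X_adj {a b c : Fin n} (hab : a ≠ b) (hac : a ≠ c) (hbc : b ≠ c) :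
    ⁅E n a b * E n b a, E n b c * E n c b⁆ =
      E n a c * E n b a * E n c b - E n b c * E n a b * E n c a := by
  rw [lie_XX_expand]
  simp only [lie_E, if_pos rfl, if_neg hab, if_neg hac, if_neg hbc, if_neg hab.symm,
    if_neg hac.symm, if_neg hbc.symm]
  noncomm_ring

/-- `[X_{ac}, X_{bc}]` for pairwise distinct `a, b, c`. -/
lemma lie_X_adj2 {a b c : Fin n} (hab : a ≠ b) (hac : a ≠ c) (hbc : b ≠ c) :
    ⁅E n a c * E n c a, E n b c * E n c b⁆ =
      E n b c * E n a b * E n c a - E n a c * E n b a * E n c b := by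
  rw [lie_XX_expand]
  simp only [lie_E, if_pos rfl, if_neg hab, if_neg hac, if_neg hbc, if_neg hab.symm,
    if_neg hac.symm, if_neg hbc.symm]
  noncomm_ring
  abel

/-- `[X_{ab}, X_{ba}] = 0`. -/
lemma lie_X_rev {a b : Fin n} (hab : a ≠ b) :
    ⁅E n a b * E n b a, E n b a * E n a b⁆ = 0 := by
  have h1 : ⁅E n a b * E n b a, E n a a⁆ = 0 := by
    rw [mul_lie']
    simp only [lie_E, if_pos rfl, if_neg hab, if_neg hab.symm]
    noncomm_ring
    abel
  have h2 : ⁅E n a b * E n b a, E n b b⁆ = 0 := by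
    rw [mul_lie']
    simp only [lie_E, if_pos rfl, if_neg hab, if_neg hab.symm]
    noncomm_ring
    abel
  have hswap : E n b a * E n a b = E n a b * E n b a + (E n b b - E n a a) := by
    have h := lie_E (n := n) b a a b
    rw [Ring.lie_def] at h
    simp only [if_pos rfl] at h
    exact sub_eq_iff_eq_add'.mp h
  rw [hswap, lie_add, lie_sub, h1, h2, lie_self]
  simp

lemma scalar_id {a b c : ℂ} (hab : a ≠ b) (hac : a ≠ c) (hbc : b ≠ c) :
    (a - b)⁻¹ * (b - c)⁻¹ + (a - c)⁻¹ * (b - a)⁻¹ - (a - c)⁻¹ * (b - c)⁻¹ = 0 := by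
  have h1 : a - b ≠ 0 := sub_ne_zero.mpr hab
  have h2 : a - c ≠ 0 := sub_ne_zero.mpr hac
  have h3 : b - c ≠ 0 := sub_ne_zero.mpr hbc
  have h4 : b - a ≠ 0 := sub_ne_zero.mpr (Ne.symm hab)
  field_simp
  ring

/-- The key vanishing identity for each `m ∉ {i, k}`. -/
lemma per_m (z : Fin n → ℂ) {i k m : Fin n} (hz : Function.Injective z)
    (hik : i ≠ k) (him : i ≠ m) (hkm : k ≠ m) :
    ((z i - z k)⁻¹ * (z k - z m)⁻¹) • ⁅E n i k * E n k i, E n k m * E n m k⁆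
    + (((z i - z m)⁻¹ * (z k - z i)⁻¹) • ⁅E n i m * E n m i, E n k i * E n i k⁆
      + ((z i - z m)⁻¹ * (z k - z m)⁻¹) • ⁅E n i m * E n m i, E n k m * E n m k⁆) = 0 := by
  set T : UniversalEnvelopingAlgebra ℂ (gl n) :=
    E n i m * E n k i * E n m k - E n k m * E n i k * E n m i with hT
  have e1 : ⁅E n i k * E n k i, E n k m * E n m k⁆ = T := lie_X_adj hik him hkm
  have e2 : ⁅E n i m * E n m i, E n k i * E n i k⁆ = T := by
    rw [← lie_skew, lie_X_adj hik.symm hkm him, hT]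
    noncomm_ring
  have e3 : ⁅E n i m * E n m i, E n k m * E n m k⁆ = -T := by
    rw [lie_X_adj2 hik him hkm, hT]
    noncomm_ring
  rw [e1, e2, e3]
  have hs : (z i - z k)⁻¹ * (z k - z m)⁻¹ + (z i - z m)⁻¹ * (z k - z i)⁻¹
      - (z i - z m)⁻¹ * (z k - z m)⁻¹ = 0 :=
    scalar_id (fun h => hik (hz h)) (fun h => him (hz h)) (fun h => hkm (hz h))
  have : ((z i - z k)⁻¹ * (z k - z m)⁻¹) • T
      + (((z i - z m)⁻¹ * (z k - z i)⁻¹) • T + ((z i - z m)⁻¹ * (z k - z m)⁻¹) • (-T))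
      = ((z i - z k)⁻¹ * (z k - z m)⁻¹ + (z i - z m)⁻¹ * (z k - z i)⁻¹
          - (z i - z m)⁻¹ * (z k - z m)⁻¹) • T := by
    module
  rw [this, hs, zero_smul]

lemma lie_sum'' {ι : Type*} (x : UniversalEnvelopingAlgebra ℂ (gl n)) (s : Finset ι)
    (f : ι → UniversalEnvelopingAlgebra ℂ (gl n)) :
    ⁅x, ∑ a ∈ s, f a⁆ = ∑ a ∈ s, ⁅x, f a⁆ := by
  induction s using Finset.cons_induction with
  | empty => simp
  | cons a s ha ih => simp [Finset.sum_cons, lie_add, ih]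

lemma sum_lie'' {ι : Type*} (x : UniversalEnvelopingAlgebra ℂ (gl n)) (s : Finset ι)
    (f : ι → UniversalEnvelopingAlgebra ℂ (gl n)) :
    ⁅∑ a ∈ s, f a, x⁆ = ∑ a ∈ s, ⁅f a, x⁆ := by
  induction s using Finset.cons_induction with
  | empty => simp
  | cons a s ha ih => simp [Finset.sum_cons, add_lie, ih]

/-- Abstract double-sum splitting lemma. -/
lemma sum_split {M : Type*} [AddCommMonoid M] {i k : Fin n} (hik : i ≠ k)
    (F : Fin n → Fin n → M)
    (hD : F k i = 0)
    (hdisj : ∀ j l, j ≠ i → j ≠ k → l ≠ i → l ≠ k → j ≠ l → F j l = 0)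
    (hper : ∀ m, m ≠ i → m ≠ k → F k m + (F m i + F m m) = 0) :
    ∑ j ∈ Finset.univ.erase i, ∑ l ∈ Finset.univ.erase k, F j l = 0 := by
  classical
  have hki : k ∈ Finset.univ.erase i := by simp [Ne.symm hik]
  have hik' : i ∈ Finset.univ.erase k := by simp [hik]
  rw [← Finset.add_sum_erase _ _ hki, ← Finset.add_sum_erase _ _ hik', hD, zero_add]
  have h1 : ∀ j ∈ (Finset.univ.erase i).erase k,
      (∑ l ∈ Finset.univ.erase k, F j l) = F j i + F j j := by
    intro j hj
    rw [Finset.mem_erase, Finset.mem_erase] at hj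
    obtain ⟨hjk, hji, -⟩ := hj
    rw [← Finset.add_sum_erase _ _ hik']
    congr 1
    apply Finset.sum_eq_single_of_mem
    · simp [Finset.mem_erase, hji, hjk]
    · intro l hl hlj
      rw [Finset.mem_erase, Finset.mem_erase] at hl
      exact hdisj j l hji hjk hl.1 hl.2.1 (Ne.symm hlj)
  rw [Finset.sum_congr rfl h1, Finset.erase_right_comm]
  rw [← Finset.sum_add_distrib]
  apply Finset.sum_eq_zero
  intro m hm
  rw [Finset.mem_erase, Finset.mem_erase] at hm
  exact hper m hm.2.1 hm.1

end GaudinAux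

open GaudinAux in
/-- for pairwise distinct `z_1, …, z_n` the quadratic Gaudin
Hamiltonians commute: `[H_i, H_k] = 0`. -/
theorem gaudin_hamiltonians_commute (n : ℕ) (z : Fin n → ℂ)
    (hz : Function.Injective z) (i k : Fin n) :
    gaudinH n z i * gaudinH n z k = gaudinH n z k * gaudinH n z i := by
  rcases eq_or_ne i k with rfl | hik
  · rfl
  have key : ⁅gaudinH n z i, gaudinH n z k⁆ = 0 := by
    have expand : ⁅gaudinH n z i, gaudinH n z k⁆
        = ∑ j ∈ Finset.univ.erase i, ∑ l ∈ Finset.univ.erase k,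
            ((z i - z j)⁻¹ * (z k - z l)⁻¹) • ⁅E n i j * E n j i, E n k l * E n l k⁆ := by
      rw [gaudinH, gaudinH, sum_lie'']
      refine Finset.sum_congr rfl fun j hj => ?_
      rw [smul_lie, lie_sum'', Finset.smul_sum]
      refine Finset.sum_congr rfl fun l hl => ?_
      rw [lie_smul, smul_smul]
    rw [expand]
    refine sum_split hik _ ?_ ?_ ?_
    · rw [lie_X_rev hik, smul_zero]
    · intro j l hji hjk hli hlk hjl
      rw [lie_X_disjoint hik (Ne.symm hli) hjk hjl, smul_zero]
    · intro m hmi hmk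
      exact per_m z hz hik (Ne.symm hmi) (Ne.symm hmk)
  rw [Ring.lie_def, sub_eq_zero] at key
  exact key
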